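/- For every real x ≠ 0 one has lim_{α → 1, α ∈ (0,2)\{1}} Γ(1−α) ( (−ix)^α + ix·cos( (π/2)(1−α) ) ) = ix·log(−ix), where Γ is the complex Gamma function and complex powers and logarithms are taken with the principal branch. -/

import Mathlib

open Real Filter Set Complex

noncomputable section

theorem stmt11 (x : ℝ) (hx : x ≠ 0) :
    Tendsto
      (fun α : ℝ =>
        Complex.Gamma (1 - (α : ℂ)) *
          ((-Complex.I * (x : ℂ)) ^ ((α : ℝ) : ℂ)
            + Complex.I * (x : ℂ) * Complex.cos ((Real.pi : ℂ) / 2 * (1 - (α : ℂ)))))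
      (nhdsWithin 1 (Set.Ioo (0 : ℝ) 2 \ {1}))
      (nhds (Complex.I * (x : ℂ) * Complex.log (-Complex.I * (x : ℂ)))) := by
  set z : ℂ := -Complex.I * (x : ℂ) with hz_def
  have hz : z ≠ 0 := by
    simp [hz_def, Complex.I_ne_zero, hx]
  set h : ℝ → ℂ := fun α =>
    z ^ ((α : ℝ) : ℂ) + Complex.I * (x : ℂ) * Complex.cos ((Real.pi : ℂ) / 2 * (1 - (α : ℂ)))
    with hh_def
  have hIx : Complex.I * (x : ℂ) = -z := by rw [hz_def]; ring
  have h1 : h 1 = 0 := by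
    simp only [hh_def, hIx]
    norm_num [Complex.cpow_one]
  -- derivative of h at 1 is z * log z
  have hderiv : HasDerivAt h (z * Complex.log z) 1 := by
    have hlin : HasDerivAt (fun w : ℂ => (Real.pi : ℂ) / 2 * (1 - w))
        ((Real.pi : ℂ) / 2 * (-1)) (1 : ℂ) := by
      exact (((hasDerivAt_id (1 : ℂ)).const_sub 1)).const_mul _
    have hcos : HasDerivAt (fun w : ℂ => Complex.cos ((Real.pi : ℂ) / 2 * (1 - w)))
        (-Complex.sin ((Real.pi : ℂ) / 2 * (1 - 1)) * ((Real.pi : ℂ) / 2 * (-1))) (1 : ℂ) :=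
      hlin.ccos
    have hcos' : HasDerivAt (fun w : ℂ =>
        Complex.I * (x : ℂ) * Complex.cos ((Real.pi : ℂ) / 2 * (1 - w)))
        (Complex.I * (x : ℂ) * (-Complex.sin ((Real.pi : ℂ) / 2 * (1 - 1)) *
          ((Real.pi : ℂ) / 2 * (-1)))) (1 : ℂ) := hcos.const_mul _
    have hpow : HasDerivAt (fun w : ℂ => z ^ w) (z ^ (1 : ℂ) * Complex.log z) (1 : ℂ) := by
      simpa using (hasDerivAt_id (1 : ℂ)).const_cpow (Or.inl hz)
    have := (hpow.add hcos').comp_ofReal (z := 1)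
    convert this using 1
    all_goals simp [hh_def, Complex.cpow_one]
  have hslope : Tendsto (slope h 1) (nhdsWithin 1 {(1:ℝ)}ᶜ) (nhds (z * Complex.log z)) :=
    hasDerivAt_iff_tendsto_slope.mp hderiv
  -- Gamma part
  have hGamma : Tendsto (fun α : ℝ => Complex.Gamma (2 - (α : ℂ))) (nhds 1)
      (nhds 1) := by
    have hc : ContinuousAt Complex.Gamma 1 := by
      refine (Complex.differentiableAt_Gamma 1 ?_).continuousAt
      intro m hm
      have h2 : (1 : ℂ).re = (-(m : ℂ)).re := by rw [hm]
      simp only [Complex.one_re, Complex.neg_re, Complex.natCast_re] at h2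
      have h3 : (0 : ℝ) ≤ (m : ℝ) := Nat.cast_nonneg m
      linarith
    have hcont : Tendsto (fun α : ℝ => 2 - (α : ℂ)) (nhds 1) (nhds 1) := by
      have := (tendsto_const_nhds (x := (2:ℂ))).sub (Complex.continuous_ofReal.tendsto 1)
      norm_num at this
      exact this
    simpa [Complex.Gamma_one, Function.comp_def] using hc.tendsto.comp hcont
  -- combine
  have hmain : Tendsto (fun α : ℝ => Complex.Gamma (2 - (α : ℂ)) * (-(slope h 1 α)))
      (nhdsWithin 1 (Set.Ioo (0 : ℝ) 2 \ {1})) (nhds (1 * (-(z * Complex.log z)))) := by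
    refine Tendsto.mul ?_ ?_
    · exact hGamma.mono_left nhdsWithin_le_nhds
    · exact (hslope.neg).mono_left (nhdsWithin_mono _ (fun a ha => ha.2))
  have heq : ∀ᶠ α : ℝ in nhdsWithin 1 (Set.Ioo (0 : ℝ) 2 \ {1}),
      Complex.Gamma (2 - (α : ℂ)) * (-(slope h 1 α)) = Complex.Gamma (1 - (α : ℂ)) * h α := by
    filter_upwards [self_mem_nhdsWithin] with α hα
    have hα1 : α ≠ 1 := hα.2
    have hne : (1 : ℂ) - (α : ℂ) ≠ 0 := by
      intro hc
      apply hα1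
      have : (α : ℂ) = 1 := by linear_combination -hc
      exact_mod_cast this
    have hGsucc : Complex.Gamma (2 - (α : ℂ)) = (1 - (α : ℂ)) * Complex.Gamma (1 - (α : ℂ)) := by
      have := Complex.Gamma_add_one (1 - (α : ℂ)) hne
      rw [← this]; ring_nf
    rw [hGsucc]
    rw [slope_def_module, h1]
    rw [sub_zero, Complex.real_smul, Complex.ofReal_inv, Complex.ofReal_sub, Complex.ofReal_one]
    have hαne : (α : ℂ) - 1 ≠ 0 := by
      intro hc; apply hne; linear_combination -hc
    field_simp
    ring
  have := hmain.congr' heq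
  convert this using 2
  rw [hIx]
  ring

end
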